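/- Let Y ⊆ X be a nonempty irreducible closed subset with f^[l](Y) = Y for some l ≥ 1, let κ_+(Y) := lim_{n→∞} [κ_n(Y)]^{1/n}, and let δ > 1. If κ_+(Y) ≥ δ, then for every m ≥ 1 the set Y is contained in the orbit ⋃_{i≥0} f^[i]({x ∈ X : κ_m(x) ≥ δ^m}). -/

import Mathlib

open Filter

/-- If `Y` is a periodic nonempty irreducible closed subset with `κ₊(Y) ≥ δ > 1`,
then for every `m ≥ 1`, `Y` is contained in the orbit of `{κ_m ≥ δ^m}`. -/
theorem stmt_9 {X : Type*} [TopologicalSpace X] [Nonempty X]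
    [TopologicalSpace.NoetherianSpace X] [IrreducibleSpace X]
    (f : X → X) (hf_cont : Continuous f) (hf_open : IsOpenMap f)
    (hf_closed : IsClosedMap f) (hf_surj : Function.Surjective f)
    (κ : ℕ → X → ℝ)
    (hκ1 : ∀ n x, 1 ≤ κ n x)
    (hκmin : ∀ n, ∃ x, κ n x = 1)
    (hκusc : ∀ n (δ : ℝ), IsClosed {x : X | δ ≤ κ n x})
    (hκsub : ∀ n m x, κ (n + m) x ≤ κ n x * κ m (f^[n] x))
    (hBaire : ∀ Y : Set X, Y.Nonempty → IsClosed Y → IsIrreducible Y →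
      ∀ Z : ℕ → Set X, (∀ i, IsClosed (Z i) ∧ Z i ⊂ Y) → Y ≠ ⋃ i, Z i)
    (Y : Set X) (hY_ne : Y.Nonempty) (hY_cl : IsClosed Y) (hY_irr : IsIrreducible Y)
    (l : ℕ) (hl : 1 ≤ l) (hY_per : f^[l] '' Y = Y)
    (c : ℝ)
    (hc : Tendsto (fun n : ℕ => (sInf (κ n '' Y)) ^ (1 / (n : ℝ))) atTop (nhds c))
    (δ : ℝ) (hδ : 1 < δ) (hcδ : δ ≤ c) :
    ∀ m : ℕ, 1 ≤ m → Y ⊆ ⋃ i : ℕ, f^[i] '' {x : X | δ ^ m ≤ κ m x} := by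
  intro m hm x hxY
  by_contra hx
  have hδm : (1:ℝ) < δ ^ m := one_lt_pow₀ hδ (by omega)
  -- the decreasing family of closed sets stabilizes : uniform gap
  let C : ℕ → TopologicalSpace.Closeds X :=
    fun j => ⟨{y : X | δ ^ m - 1/((j:ℝ)+1) ≤ κ m y}, hκusc m _⟩
  obtain ⟨a, ⟨N, rfl⟩, hmin⟩ :=
    (wellFounded_lt (α := TopologicalSpace.Closeds X)).has_min
      (Set.range C) (Set.range_nonempty C)
  set t : ℝ := δ ^ m - 1/((N:ℝ)+1) with ht
  have htlt : t < δ ^ m := by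
    have h0 : (0:ℝ) < 1/((N:ℝ)+1) := by positivity
    have := sub_lt_self (δ ^ m) h0
    rwa [← ht] at this
  have hCeq : ∀ j, N ≤ j → C j = C N := by
    intro j hj
    have hsub : (C j : Set X) ⊆ (C N : Set X) := by
      intro y hy
      have h1 : (1:ℝ)/((j:ℝ)+1) ≤ 1/((N:ℝ)+1) := by
        apply one_div_le_one_div_of_le (by positivity)
        have : (N:ℝ) ≤ j := Nat.cast_le.2 hj
        linarith
      have : δ ^ m - 1/((j:ℝ)+1) ≤ κ m y := hy
      show δ ^ m - 1/((N:ℝ)+1) ≤ κ m y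
      linarith
    have hle : C j ≤ C N := hsub
    rcases lt_or_eq_of_le hle with h | h
    · exact absurd h (hmin (C j) (Set.mem_range_self j))
    · exact h
  -- key: t ≤ κ m y  →  δ^m ≤ κ m y
  have hkey : ∀ y : X, t ≤ κ m y → δ ^ m ≤ κ m y := by
    intro y hy
    by_contra hlt
    push_neg at hlt
    obtain ⟨j, hj⟩ := exists_nat_one_div_lt (show (0:ℝ) < δ ^ m - κ m y by linarith)
    have hj' : N ≤ max j N := le_max_right _ _
    have hyj : y ∈ (C (max j N) : Set X) := by rw [hCeq _ hj']; exact hy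
    have h1 : (1:ℝ)/(((max j N : ℕ):ℝ)+1) ≤ 1/((j:ℝ)+1) := by
      apply one_div_le_one_div_of_le (by positivity)
      have : (j:ℝ) ≤ ((max j N : ℕ):ℝ) := Nat.cast_le.2 (le_max_left _ _)
      linarith
    have : δ ^ m - 1/(((max j N : ℕ):ℝ)+1) ≤ κ m y := hyj
    linarith
  have ht1 : 1 < t := by
    by_contra hle
    push_neg at hle
    obtain ⟨y₀, hy₀⟩ := hκmin m
    have : δ ^ m ≤ κ m y₀ := hkey y₀ (by rw [hy₀]; exact hle)
    rw [hy₀] at this; linarith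
  have ht0 : (0:ℝ) < t := lt_trans one_pos ht1
  -- contrapositive gap
  have hgap : ∀ y : X, ¬ δ ^ m ≤ κ m y → κ m y ≤ t := by
    intro y hy
    by_contra h
    push_neg at h
    exact hy (hkey y h.le)
  -- periodicity
  have hper : ∀ k : ℕ, f^[k*l] '' Y = Y := by
    intro k
    induction k with
    | zero => simp
    | succ k ih =>
      have : (k+1)*l = k*l + l := by ring
      rw [this, Function.iterate_add, Set.image_comp, hY_per, ih]
  -- cocycle chain bound
  have hchain : ∀ q : ℕ, ∀ z : X, (∀ j, j < q + 1 → κ m (f^[j*m] z) ≤ t) →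
      κ ((q+1)*m) z ≤ t ^ (q+1) := by
    intro q
    induction q with
    | zero =>
      intro z hz
      have := hz 0 (by omega)
      simpa using this
    | succ q ih =>
      intro z hz
      have h1 : κ ((q+2)*m) z ≤ κ ((q+1)*m) z * κ m (f^[(q+1)*m] z) := by
        have := hκsub ((q+1)*m) m z
        have he : (q+1)*m + m = (q+2)*m := by ring
        rwa [he] at this
      have h2 : κ ((q+1)*m) z ≤ t ^ (q+1) := ih z (fun j hj => hz j (by omega))
      have h3 : κ m (f^[(q+1)*m] z) ≤ t := hz (q+1) (by omega)
      calc κ ((q+2)*m) z ≤ κ ((q+1)*m) z * κ m (f^[(q+1)*m] z) := h1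
        _ ≤ t ^ (q+1) * t := by
            apply mul_le_mul h2 h3 (le_trans zero_le_one (hκ1 _ _)) (by positivity)
        _ = t ^ (q+2) := by ring
  -- x misses the orbit
  have hxi : ∀ i : ℕ, ∀ p : X, δ ^ m ≤ κ m p → f^[i] p ≠ x := by
    intro i p hp hip
    exact hx (Set.mem_iUnion.2 ⟨i, ⟨p, hp, hip⟩⟩)
  -- subsequence bound
  have key3 : ∀ k : ℕ, sInf (κ (((k+1)*l)*m) '' Y) ≤ t ^ ((k+1)*l) := by
    intro k
    obtain ⟨q, hq⟩ : ∃ q : ℕ, (k+1)*l = q + 1 := ⟨(k+1)*l - 1, by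
      have : 1 ≤ (k+1)*l := Nat.one_le_iff_ne_zero.2 (by positivity)
      omega⟩
    have hYn : f^[((k+1)*m)*l] '' Y = Y := hper ((k+1)*m)
    have hidx : ((k+1)*m)*l = ((k+1)*l)*m := by ring
    rw [hidx] at hYn
    obtain ⟨z, hzY, hzx⟩ : ∃ z ∈ Y, f^[((k+1)*l)*m] z = x := by
      rw [← hYn] at hxY; exact hxY
    have hfac : ∀ j, j < (k+1)*l → κ m (f^[j*m] z) ≤ t := by
      intro j hj
      apply hgap
      intro hS
      apply hxi (((k+1)*l - j)*m) (f^[j*m] z) hS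
      rw [← Function.iterate_add_apply]
      have : ((k+1)*l - j)*m + j*m = ((k+1)*l)*m := by
        have : ((k+1)*l - j) + j = (k+1)*l := by omega
        calc ((k+1)*l - j)*m + j*m = (((k+1)*l - j) + j)*m := by ring
          _ = ((k+1)*l)*m := by rw [this]
      rw [this, hzx]
    have hzb : κ (((k+1)*l)*m) z ≤ t ^ ((k+1)*l) := by
      rw [hq]
      exact hchain q z (fun j hj => hfac j (by omega))
    refine le_trans (csInf_le ⟨1, ?_⟩ (Set.mem_image_of_mem _ hzY)) hzb
    rintro b ⟨w, -, rfl⟩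
    exact hκ1 _ w
  -- pass to the limit
  set g : ℝ := t ^ ((1:ℝ)/(m:ℝ)) with hg
  have hm0 : (0:ℝ) < m := by exact_mod_cast hm
  have hbound : ∀ k : ℕ, sInf (κ (((k+1)*l)*m) '' Y) ^ (1/((((k+1)*l)*m : ℕ):ℝ)) ≤ g := by
    intro k
    set n : ℕ := ((k+1)*l)*m with hn
    set q : ℕ := (k+1)*l with hq
    have hq0 : (0:ℝ) < q := by
      have : 1 ≤ q := Nat.one_le_iff_ne_zero.2 (by positivity)
      exact_mod_cast this
    have hn0 : (0:ℝ) < n := by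
      have h : 0 < n := by
        rw [hn]; exact Nat.mul_pos (Nat.mul_pos (by omega) (by omega)) (by omega)
      exact_mod_cast h
    have h1 : (1:ℝ) ≤ sInf (κ n '' Y) := by
      apply le_csInf (hY_ne.image _)
      rintro b ⟨w, -, rfl⟩
      exact hκ1 _ w
    have h2 : sInf (κ n '' Y) ^ (1/(n:ℝ)) ≤ (t ^ q) ^ (1/(n:ℝ)) :=
      Real.rpow_le_rpow (by linarith) (key3 k) (by positivity)
    have h3 : ((t ^ q : ℝ)) ^ (1/(n:ℝ)) = g := by
      rw [← Real.rpow_natCast t q, ← Real.rpow_mul ht0.le, hg]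
      congr 1
      have hnn : (n:ℝ) = (q:ℝ) * (m:ℝ) := by rw [hn, hq]; push_cast; ring
      rw [hnn]
      field_simp
    rw [h3] at h2
    exact h2
  have hsm : StrictMono (fun k : ℕ => ((k+1)*l)*m) := by
    intro a b hab
    have hlm : 1 ≤ l*m := Nat.one_le_iff_ne_zero.2 (by positivity)
    calc ((a+1)*l)*m = (a+1)*(l*m) := by ring
      _ < (b+1)*(l*m) := mul_lt_mul_of_pos_right (by omega) (by omega)
      _ = ((b+1)*l)*m := by ring
  have hsubT : Tendsto (fun k : ℕ => sInf (κ (((k+1)*l)*m) '' Y) ^ (1/((((k+1)*l)*m : ℕ):ℝ)))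
      atTop (nhds c) := hc.comp hsm.tendsto_atTop
  have hcg : c ≤ g := le_of_tendsto hsubT (Eventually.of_forall hbound)
  have hgδ : g < δ := by
    have h1 : g < (δ ^ m) ^ ((1:ℝ)/(m:ℝ)) :=
      Real.rpow_lt_rpow ht0.le htlt (by positivity)
    have h2 : ((δ ^ m : ℝ)) ^ ((1:ℝ)/(m:ℝ)) = δ := by
      rw [← Real.rpow_natCast δ m, ← Real.rpow_mul (by linarith : (0:ℝ) ≤ δ)]
      rw [mul_one_div, div_self (ne_of_gt hm0), Real.rpow_one]
    rwa [h2] at h1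
  linarith
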